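/- Let M be a von Neumann algebra of type I on a complex Hilbert space H and let e ∈ M be a partial isometry. Then the Peirce 2-space M₂(e) = {x ∈ M : ee*xe*e = x}, which is a von Neumann algebra under the product x·y = xe*y and involution x♯ = ex*e with unit e, is again of type I. Explicitly: for every nonzero v ∈ M₂(e) satisfying ve*v = v, ev*e = v, and ve*x = xe*v for all x ∈ M₂(e) (i.e., v is a nonzero central projection of (M₂(e),·,♯)), there exists a nonzero z ∈ M₂(e) with ze*z = z, ez*e = z, ze*v = z, and (ze*xe*z)e*(ze*ye*z) = (ze*ye*z)e*(ze*xe*z) for all x, y ∈ M₂(e) (i.e., z is a nonzero abelian projection of (M₂(e),·,♯) dominated by v). -/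

import Mathlib

variable {H : Type*} [NormedAddCommGroup H] [InnerProductSpace ℂ H] [CompleteSpace H]

/-- A *-algebra of operators (given as a set `S`) is of type I if every nonzero
central projection of `S` dominates a nonzero abelian projection of `S`. -/
def TypeISet (S : Set (H →L[ℂ] H)) : Prop :=
  ∀ v ∈ S, v = star v → v * v = v → (∀ x ∈ S, v * x = x * v) → v ≠ 0 →
    ∃ h ∈ S, h = star h ∧ h * h = h ∧ h ≠ 0 ∧ v * h = h ∧
      ∀ x ∈ S, ∀ y ∈ S, (h * x * h) * (h * y * h) = (h * y * h) * (h * x * h)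

/-- The Peirce 2-space of a partial isometry `e` in a von Neumann algebra
`M`: `M₂(e) = {x ∈ M : ee*xe*e = x}`, a von Neumann algebra under the product
`x·y = xe*y` and involution `x♯ = ex*e`, with unit `e`. -/
def PeirceTwo (M : VonNeumannAlgebra H) (e : H →L[ℂ] H) : Set (H →L[ℂ] H) :=
  {x | x ∈ M ∧ e * star e * x * star e * e = x}

set_option linter.unusedSectionVars false
set_option maxHeartbeats 1000000

local notation "⟪" x ", " y "⟫" => @inner ℂ _ _ x y

open Filter Topology

lemma inv_exists (b : H →L[ℂ] H) (t : ℝ) (ht : 0 < t) :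
    ∃ R : H →L[ℂ] H, (star b * b + (t : ℂ) • 1) * R = 1 ∧
      R * (star b * b + (t : ℂ) • 1) = 1 ∧ ‖R‖ ≤ t⁻¹ := by
  set S : H →L[ℂ] H := star b * b + (t : ℂ) • 1 with hS
  have hinner : ∀ u : H, ⟪S u, u⟫ = (‖b u‖ ^ 2 : ℝ) + (t : ℂ) * (‖u‖ ^ 2 : ℝ) := by
    intro u
    have : S u = (star b) (b u) + (t : ℂ) • u := by simp [hS]
    rw [this, inner_add_left, inner_smul_left]
    rw [ContinuousLinearMap.star_eq_adjoint, ContinuousLinearMap.adjoint_inner_left]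
    simp [inner_self_eq_norm_sq_to_K]
  have hlow : ∀ u : H, t * ‖u‖ ^ 2 ≤ ‖S u‖ * ‖u‖ := by
    intro u
    have h1 : t * ‖u‖ ^ 2 ≤ ‖⟪S u, u⟫‖ := by
      have h2 : ‖⟪S u, u⟫‖ = ‖b u‖ ^ 2 + t * ‖u‖ ^ 2 := by
        rw [hinner u]
        rw [show ((‖b u‖ ^ 2 : ℝ) : ℂ) + (t : ℂ) * ((‖u‖ ^ 2 : ℝ) : ℂ)
            = (((‖b u‖ ^ 2 + t * ‖u‖ ^ 2 : ℝ)) : ℂ) by push_cast; ring]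
        rw [Complex.norm_real, Real.norm_eq_abs, abs_of_nonneg (by positivity)]
      rw [h2]
      nlinarith [sq_nonneg ‖b u‖]
    calc t * ‖u‖ ^ 2 ≤ ‖⟪S u, u⟫‖ := h1
      _ ≤ ‖S u‖ * ‖u‖ := by
          simpa using norm_inner_le_norm (𝕜 := ℂ) (S u) u
  have hbound : ∀ u : H, ‖u‖ ≤ t⁻¹ * ‖S u‖ := by
    intro u
    rcases eq_or_ne u 0 with rfl | hu
    · simp
    · have hn : 0 < ‖u‖ := norm_pos_iff.mpr hu
      have h := hlow u
      rw [pow_two] at h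
      have h3 : t * ‖u‖ ≤ ‖S u‖ :=
        (mul_le_mul_iff_left₀ hn).mp (by linarith : (t * ‖u‖) * ‖u‖ ≤ ‖S u‖ * ‖u‖)
      calc ‖u‖ = t⁻¹ * (t * ‖u‖) := by field_simp
        _ ≤ t⁻¹ * ‖S u‖ := mul_le_mul_of_nonneg_left h3 (by positivity)
  have hanti : AntilipschitzWith (t⁻¹).toNNReal S := by
    apply S.antilipschitz_of_bound
    intro x
    simpa [Real.coe_toNNReal _ (by positivity : (0:ℝ) ≤ t⁻¹)] using hbound x
  have hker : S.ker = ⊥ := by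
    apply Submodule.eq_bot_iff _ |>.mpr
    intro u hu
    exact hanti.injective (by simpa using hu : S u = S 0)
  have hclosed : (S.range).topologicalClosure = S.range :=
    ContinuousLinearMap.closed_range_of_antilipschitz hanti
  have horth : (S.range)ᗮ = ⊥ := by
    rw [Submodule.eq_bot_iff]
    intro u hu
    have h0 : ⟪S u, u⟫ = 0 := (Submodule.mem_orthogonal _ u).mp hu (S u) ⟨u, rfl⟩
    rw [hinner u] at h0
    have h0' : (‖b u‖ ^ 2 + t * ‖u‖ ^ 2 : ℝ) = 0 := by exact_mod_cast h0
    have : ‖u‖ ^ 2 = 0 := by nlinarith [sq_nonneg ‖b u‖, sq_nonneg ‖u‖]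
    simpa [pow_eq_zero_iff] using this
  have hrange : S.range = ⊤ := by
    haveI : CompleteSpace (S.range) := by
      rw [← hclosed]
      exact (S.range).isClosed_topologicalClosure.completeSpace_coe
    exact Submodule.orthogonal_eq_bot_iff.mp horth
  set eqv := ContinuousLinearEquiv.ofBijective S hker hrange with heqv
  refine ⟨(eqv.symm : H →L[ℂ] H), ?_, ?_, ?_⟩
  · ext u
    simp [heqv]
  · ext u
    simp [heqv]
  · apply ContinuousLinearMap.opNorm_le_bound _ (by positivity)
    intro u
    calc ‖eqv.symm u‖ ≤ t⁻¹ * ‖S (eqv.symm u)‖ := hbound _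
      _ = t⁻¹ * ‖u‖ := by
          rw [show S (eqv.symm u) = eqv (eqv.symm u) from rfl, eqv.apply_symm_apply]

noncomputable def projCLM (K : Submodule ℂ H) [CompleteSpace K] : H →L[ℂ] H :=
  K.subtypeL ∘L K.orthogonalProjectionOnto

lemma projCLM_mem (K : Submodule ℂ H) [CompleteSpace K] (u : H) : projCLM K u ∈ K :=
  (K.orthogonalProjectionOnto u).2

lemma projCLM_eq_self (K : Submodule ℂ H) [CompleteSpace K] {u : H} (hu : u ∈ K) :
    projCLM K u = u := by
  simpa [projCLM] using congrArg Subtype.val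
    (Submodule.orthogonalProjectionOnto_mem_subspace_eq_self (⟨u, hu⟩ : K))

lemma projCLM_orth_zero (K : Submodule ℂ H) [CompleteSpace K] {u : H} (hu : u ∈ Kᗮ) :
    projCLM K u = 0 := by
  simpa [projCLM] using congrArg Subtype.val
    (Submodule.orthogonalProjectionOnto_apply_of_mem_orthogonal hu)

lemma projCLM_sub_mem_orth (K : Submodule ℂ H) [CompleteSpace K] (u : H) :
    u - projCLM K u ∈ Kᗮ :=
  K.sub_starProjection_mem_orthogonal u

lemma projCLM_star (K : Submodule ℂ H) [CompleteSpace K] : star (projCLM K) = projCLM K :=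
  isSelfAdjoint_starProjection K

lemma projCLM_idem (K : Submodule ℂ H) [CompleteSpace K] :
    projCLM K * projCLM K = projCLM K := by
  ext u
  exact congrArg _ (rfl) |>.trans (projCLM_eq_self K (projCLM_mem K u))

lemma projCLM_commute (K : Submodule ℂ H) [CompleteSpace K] (b : H →L[ℂ] H)
    (h1 : ∀ u ∈ K, b u ∈ K) (h2 : ∀ u ∈ K, (star b) u ∈ K) :
    b * projCLM K = projCLM K * b := by
  ext u
  have hdec : b u = b (projCLM K u) + b (u - projCLM K u) := by
    rw [← map_add]; congr 1; abel
  have h3 : projCLM K (b (projCLM K u)) = b (projCLM K u) :=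
    projCLM_eq_self K (h1 _ (projCLM_mem K u))
  have h4 : b (u - projCLM K u) ∈ Kᗮ := by
    rw [Submodule.mem_orthogonal']
    intro v hv
    have : ⟪b (u - projCLM K u), v⟫ = ⟪u - projCLM K u, (star b) v⟫ := by
      rw [ContinuousLinearMap.star_eq_adjoint, ContinuousLinearMap.adjoint_inner_right]
    rw [this]
    exact (Submodule.mem_orthogonal' _ _).mp (projCLM_sub_mem_orth K u) _ (h2 v hv)
  have h5 : projCLM K (b (u - projCLM K u)) = 0 := projCLM_orth_zero K h4
  calc (b * projCLM K) u = b (projCLM K u) := rfl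
    _ = projCLM K (b (projCLM K u)) + projCLM K (b (u - projCLM K u)) := by
        rw [h3, h5, add_zero]
    _ = projCLM K (b u) := by rw [← map_add, ← hdec]
    _ = (projCLM K * b) u := rfl

lemma invar_closure (K0 : Submodule ℂ H) (b : H →L[ℂ] H)
    (hb : ∀ u ∈ K0, b u ∈ K0.topologicalClosure) :
    ∀ u ∈ K0.topologicalClosure, b u ∈ K0.topologicalClosure := by
  intro u hu
  have : K0.topologicalClosure ≤ (K0.topologicalClosure).comap (b : H →ₗ[ℂ] H) := by
    apply Submodule.topologicalClosure_minimal
    · intro v hv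
      exact hb v hv
    · exact IsClosed.preimage b.continuous K0.isClosed_topologicalClosure
  exact this hu


lemma star_apply_eq_zero_of_mem_orth (a : H →L[ℂ] H) {u : H}
    (hu : u ∈ ((a.range : Submodule ℂ H))ᗮ) : (star a) u = 0 := by
  have : ∀ ζ : H, ⟪(star a) u, ζ⟫ = 0 := by
    intro ζ
    rw [ContinuousLinearMap.star_eq_adjoint, ContinuousLinearMap.adjoint_inner_left]
    exact (Submodule.mem_orthogonal' _ _).mp hu _ ⟨ζ, rfl⟩
  simpa [inner_self_eq_zero] using this ((star a) u)

lemma orth_range_mul_star (a : H →L[ℂ] H) :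
    (((a * star a).range : Submodule ℂ H))ᗮ = ((a.range : Submodule ℂ H))ᗮ := by
  ext u
  simp only [Submodule.mem_orthogonal]
  constructor
  · intro h v hv
    obtain ⟨ζ, rfl⟩ := hv
    have h0 : ⟪(a * star a) u, u⟫ = 0 := h _ ⟨u, rfl⟩
    have h1 : ⟪(star a) u, (star a) u⟫ = 0 := by
      have : ⟪(star a) u, (star a) u⟫ = ⟪a ((star a) u), u⟫ := by
        rw [ContinuousLinearMap.star_eq_adjoint, ContinuousLinearMap.adjoint_inner_right]
      rw [this]
      exact h0
    have h2 : (star a) u = 0 := inner_self_eq_zero.mp h1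
    calc ⟪a ζ, u⟫ = ⟪ζ, (star a) u⟫ := by
          rw [ContinuousLinearMap.star_eq_adjoint, ContinuousLinearMap.adjoint_inner_right]
      _ = 0 := by rw [h2, inner_zero_right]
  · intro h v hv
    obtain ⟨ζ, rfl⟩ := hv
    exact h _ ⟨(star a) ζ, rfl⟩

lemma Dk_tendsto (a : H →L[ℂ] H) (R : ℕ → H →L[ℂ] H)
    (hR1 : ∀ k : ℕ, (a * star a + (((1:ℝ)/(k+1) : ℝ) : ℂ) • 1) * R k = 1)
    (hR2 : ∀ k : ℕ, R k * (a * star a + (((1:ℝ)/(k+1) : ℝ) : ℂ) • 1) = 1)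
    (hR3 : ∀ k : ℕ, ‖R k‖ ≤ ((1:ℝ)/(k+1))⁻¹) (u : H) :
    haveI : CompleteSpace ((a.range : Submodule ℂ H).topologicalClosure) :=
      (a.range : Submodule ℂ H).isClosed_topologicalClosure.completeSpace_coe
    Tendsto (fun k => (a * star a * R k) u) atTop
      (𝓝 (projCLM (a.range : Submodule ℂ H).topologicalClosure u)) := by
  haveI : CompleteSpace ((a.range : Submodule ℂ H).topologicalClosure) :=
    (a.range : Submodule ℂ H).isClosed_topologicalClosure.completeSpace_coe
  set T : H →L[ℂ] H := a * star a with hT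
  set L : Submodule ℂ H := (a.range : Submodule ℂ H).topologicalClosure with hL
  set tk : ℕ → ℝ := fun k => (1:ℝ)/(k+1) with htk
  have htkpos : ∀ k, 0 < tk k := fun k => by positivity
  have htk0 : Tendsto tk atTop (𝓝 0) := tendsto_one_div_add_atTop_nhds_zero_nat
  set D : ℕ → (H →L[ℂ] H) := fun k => T * R k with hD
  have hDeq : ∀ k, D k = 1 - ((tk k : ℝ) : ℂ) • R k := by
    intro k
    have := hR1 k
    rw [add_mul, smul_mul_assoc, one_mul] at this
    have h2 : D k + ((tk k : ℝ) : ℂ) • R k = 1 := this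
    linear_combination (norm := module) h2
  have hDnorm : ∀ k, ‖D k‖ ≤ 2 := by
    intro k
    rw [hDeq k]
    calc ‖(1 : H →L[ℂ] H) - ((tk k : ℝ) : ℂ) • R k‖
        ≤ ‖(1 : H →L[ℂ] H)‖ + ‖((tk k : ℝ) : ℂ) • R k‖ := norm_sub_le _ _
      _ ≤ 1 + tk k * ‖R k‖ := by
          rw [norm_smul]
          gcongr
          · exact ContinuousLinearMap.norm_id_le
          · simp [abs_of_pos (htkpos k)]
      _ ≤ 2 := by
          have h3 := hR3 k
          have h4 : tk k * ‖R k‖ ≤ tk k * (tk k)⁻¹ := by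
            apply mul_le_mul_of_nonneg_left _ (le_of_lt (htkpos k))
            simpa [htk] using h3
          rw [mul_inv_cancel₀ (ne_of_gt (htkpos k))] at h4
          linarith
  have hTRcomm : ∀ k, T * R k = R k * T := by
    intro k
    have h1 : T * (T + ((tk k : ℝ) : ℂ) • 1) = (T + ((tk k : ℝ) : ℂ) • 1) * T := by
      simp [mul_add, add_mul, mul_smul_comm, smul_mul_assoc]
    calc T * R k = (R k * (T + ((tk k : ℝ) : ℂ) • 1)) * (T * R k) := by rw [hR2 k, one_mul]
      _ = R k * ((T + ((tk k : ℝ) : ℂ) • 1) * T) * R k := by simp only [mul_assoc]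
      _ = R k * (T * (T + ((tk k : ℝ) : ℂ) • 1)) * R k := by rw [← h1]
      _ = (R k * T) * ((T + ((tk k : ℝ) : ℂ) • 1) * R k) := by simp only [mul_assoc]
      _ = R k * T := by rw [hR1 k, mul_one]
  -- decompose u
  set s : H := projCLM L u with hs
  set v : H := u - s with hv
  have hvorth : v ∈ Lᗮ := projCLM_sub_mem_orth L u
  have hvorth' : v ∈ ((a.range : Submodule ℂ H))ᗮ := by
    have : Lᗮ ≤ ((a.range : Submodule ℂ H))ᗮ :=
      Submodule.orthogonal_le (Submodule.le_topologicalClosure _)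
    exact this hvorth
  have hstarav : (star a) v = 0 := star_apply_eq_zero_of_mem_orth a hvorth'
  have hTv : T v = 0 := by
    show a ((star a) v) = 0
    rw [hstarav, map_zero]
  have hDv : ∀ k, D k v = 0 := by
    intro k
    have hRv : R k v = (((tk k)⁻¹ : ℝ) : ℂ) • v := by
      have h1 : (T + ((tk k : ℝ) : ℂ) • 1) ((((tk k)⁻¹ : ℝ) : ℂ) • v) = v := by
        simp only [ContinuousLinearMap.add_apply, ContinuousLinearMap.smul_apply,
          ContinuousLinearMap.one_apply, map_smul, hTv, smul_zero, zero_add, smul_smul]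
        rw [← Complex.ofReal_mul, inv_mul_cancel₀ (ne_of_gt (htkpos k))]
        simp
      calc R k v = R k ((T + ((tk k : ℝ) : ℂ) • 1) ((((tk k)⁻¹ : ℝ) : ℂ) • v)) := by rw [h1]
        _ = (R k * (T + ((tk k : ℝ) : ℂ) • 1)) ((((tk k)⁻¹ : ℝ) : ℂ) • v) := rfl
        _ = (((tk k)⁻¹ : ℝ) : ℂ) • v := by rw [hR2 k]; simp
    show T (R k v) = 0
    rw [hRv, map_smul, hTv, smul_zero]
  -- s lies in closure of range of T
  have hsT : s ∈ closure ((T.range : Submodule ℂ H) : Set H) := by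
    have h1 : L = (T.range : Submodule ℂ H).topologicalClosure := by
      rw [hL, ← Submodule.orthogonal_orthogonal_eq_closure,
        ← Submodule.orthogonal_orthogonal_eq_closure, orth_range_mul_star a]
    have h2 : s ∈ L := projCLM_mem L u
    rw [h1] at h2
    rw [← Submodule.topologicalClosure_coe]; exact h2
  -- convergence on s
  have hconv : Tendsto (fun k => D k s) atTop (𝓝 s) := by
    rw [Metric.tendsto_atTop]
    intro ε hε
    obtain ⟨w, hwmem, hwdist⟩ := Metric.mem_closure_iff.mp hsT (ε/4) (by positivity)
    obtain ⟨ζ, hζ⟩ := hwmem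
    set δ : ℝ := ε / (8 * ‖ζ‖ + 4) with hδ
    have hδpos : 0 < δ := by positivity
    obtain ⟨N, hN⟩ := (Metric.tendsto_atTop.mp htk0) δ hδpos
    refine ⟨N, fun k hk => ?_⟩
    have htkδ : tk k < δ := by
      have := hN k hk
      rwa [Real.dist_eq, sub_zero, abs_of_pos (htkpos k)] at this
    have hop : D k * T = T - ((tk k : ℝ) : ℂ) • D k := by
      conv_lhs => rw [hDeq k]
      rw [sub_mul, one_mul, smul_mul_assoc, ← hTRcomm k]
    have hmid : ‖D k (T ζ) - T ζ‖ ≤ tk k * (2 * ‖ζ‖) := by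
      have h1 : D k (T ζ) = T ζ - ((tk k : ℝ) : ℂ) • D k ζ := by
        calc D k (T ζ) = (D k * T) ζ := rfl
          _ = (T - ((tk k : ℝ) : ℂ) • D k) ζ := by rw [hop]
          _ = T ζ - ((tk k : ℝ) : ℂ) • D k ζ := by simp
      rw [h1]
      have h2 : ‖T ζ - ((tk k : ℝ) : ℂ) • D k ζ - T ζ‖ = ‖((tk k : ℝ) : ℂ) • D k ζ‖ := by
        rw [show T ζ - ((tk k : ℝ) : ℂ) • D k ζ - T ζ = -(((tk k : ℝ) : ℂ) • D k ζ) by abel,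
          norm_neg]
      rw [h2, norm_smul]
      have h3 : ‖((tk k : ℝ) : ℂ)‖ = tk k := by
        simp [abs_of_pos (htkpos k)]
      rw [h3]
      have h4 : ‖D k ζ‖ ≤ 2 * ‖ζ‖ := by
        calc ‖D k ζ‖ ≤ ‖D k‖ * ‖ζ‖ := (D k).le_opNorm ζ
          _ ≤ 2 * ‖ζ‖ := by gcongr; exact hDnorm k
      exact mul_le_mul_of_nonneg_left h4 (le_of_lt (htkpos k))
    rw [dist_eq_norm]
    have hdecomp : D k s - s = D k (s - T ζ) + (D k (T ζ) - T ζ) + (T ζ - s) := by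
      rw [map_sub]; abel
    have hb1 : ‖D k (s - T ζ)‖ ≤ 2 * ‖s - T ζ‖ := by
      calc ‖D k (s - T ζ)‖ ≤ ‖D k‖ * ‖s - T ζ‖ := (D k).le_opNorm _
        _ ≤ 2 * ‖s - T ζ‖ := by gcongr; exact hDnorm k
    have hsw : ‖s - T ζ‖ < ε / 4 := by
      rw [← hζ] at hwdist
      rw [← dist_eq_norm]
      exact hwdist
    have hb2 : ‖D k (T ζ) - T ζ‖ < ε / 4 := by
      have h5 : tk k * (2 * ‖ζ‖) ≤ δ * (2 * ‖ζ‖) := by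
        apply mul_le_mul_of_nonneg_right (le_of_lt htkδ) (by positivity)
      have h6 : δ * (2 * ‖ζ‖) < ε / 4 := by
        rw [hδ]
        rw [div_mul_eq_mul_div, div_lt_div_iff₀ (by positivity) (by norm_num : (0:ℝ) < 4)]
        nlinarith [norm_nonneg ζ, hε]
      linarith [hmid]
    have hb3 : ‖T ζ - s‖ < ε / 4 := by
      rw [← norm_neg]
      simpa using hsw
    calc ‖D k s - s‖ = ‖D k (s - T ζ) + (D k (T ζ) - T ζ) + (T ζ - s)‖ := by rw [hdecomp]
      _ ≤ ‖D k (s - T ζ)‖ + ‖D k (T ζ) - T ζ‖ + ‖T ζ - s‖ := norm_add₃_le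
      _ < 2 * (ε/4) + ε/4 + ε/4 := by
          have : ‖D k (s - T ζ)‖ ≤ 2 * ‖s - T ζ‖ := hb1
          nlinarith [hsw, hb2, hb3, norm_nonneg (D k (s - T ζ))]
      _ = ε := by ring
  -- combine
  have hDu : ∀ k, D k u = D k s := by
    intro k
    have h1 : u = s + v := by rw [hv]; abel
    rw [h1, map_add, hDv k, add_zero]
  have : Tendsto (fun k => D k u) atTop (𝓝 s) := by
    simpa [funext hDu] using hconv
  exact this


lemma key_identity (a m n : H →L[ℂ] H)
    (hmm : (star a * a) * (star a * m * a) = (star a * m * a) * (star a * a))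
    (hnn : (star a * a) * (star a * n * a) = (star a * n * a) * (star a * a))
    (hmn : (star a * m * a) * (star a * n * a) = (star a * n * a) * (star a * m * a)) :
    haveI : CompleteSpace ((a.range : Submodule ℂ H).topologicalClosure) :=
      (a.range : Submodule ℂ H).isClosed_topologicalClosure.completeSpace_coe
    star a * m * projCLM (a.range : Submodule ℂ H).topologicalClosure * n * a
      = star a * n * projCLM (a.range : Submodule ℂ H).topologicalClosure * m * a := by
  haveI : CompleteSpace ((a.range : Submodule ℂ H).topologicalClosure) :=
    (a.range : Submodule ℂ H).isClosed_topologicalClosure.completeSpace_coe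
  set z : H →L[ℂ] H := projCLM (a.range : Submodule ℂ H).topologicalClosure with hz
  -- resolvents
  have hRex : ∀ k : ℕ, ∃ R : H →L[ℂ] H,
      (a * star a + (((1:ℝ)/(k+1) : ℝ) : ℂ) • 1) * R = 1 ∧
      R * (a * star a + (((1:ℝ)/(k+1) : ℝ) : ℂ) • 1) = 1 ∧ ‖R‖ ≤ ((1:ℝ)/(k+1))⁻¹ := by
    intro k
    obtain ⟨R, h1, h2, h3⟩ := inv_exists (star a) ((1:ℝ)/(k+1)) (by positivity)
    rw [star_star] at h1 h2
    exact ⟨R, h1, h2, h3⟩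
  choose R hR1 hR2 hR3 using hRex
  have hR'ex : ∀ k : ℕ, ∃ R' : H →L[ℂ] H,
      (star a * a + (((1:ℝ)/(k+1) : ℝ) : ℂ) • 1) * R' = 1 ∧
      R' * (star a * a + (((1:ℝ)/(k+1) : ℝ) : ℂ) • 1) = 1 := by
    intro k
    obtain ⟨R', h1, h2, _⟩ := inv_exists a ((1:ℝ)/(k+1)) (by positivity)
    exact ⟨R', h1, h2⟩
  choose R' hR'1 hR'2 using hR'ex
  set t : ℕ → ℂ := fun k => (((1:ℝ)/(k+1) : ℝ) : ℂ) with ht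
  -- intertwining
  have hf2 : ∀ k, star a * R k = R' k * star a := by
    intro k
    have h1 : (star a * a + t k • 1) * star a = star a * (a * star a + t k • 1) := by
      simp only [add_mul, mul_add, mul_assoc, smul_mul_assoc, one_mul, mul_smul_comm, mul_one]
    calc star a * R k = (R' k * (star a * a + t k • 1)) * (star a * R k) := by
          rw [hR'2 k, one_mul]
      _ = R' k * (((star a * a + t k • 1) * star a) * R k) := by simp only [mul_assoc]
      _ = R' k * ((star a * (a * star a + t k • 1)) * R k) := by rw [h1]
      _ = (R' k * star a) * ((a * star a + t k • 1) * R k) := by simp only [mul_assoc]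
      _ = R' k * star a := by rw [hR1 k, mul_one]
  -- commutation of resolvent with star a * c * a
  have hcomm : ∀ k, ∀ c : H →L[ℂ] H,
      (star a * a) * (star a * c * a) = (star a * c * a) * (star a * a) →
      R' k * (star a * c * a) = (star a * c * a) * R' k := by
    intro k c hc
    have h1 : (star a * a + t k • 1) * (star a * c * a)
        = (star a * c * a) * (star a * a + t k • 1) := by
      rw [add_mul, mul_add, hc, smul_mul_assoc, mul_smul_comm, one_mul, mul_one]
    calc R' k * (star a * c * a)
        = R' k * ((star a * c * a) * ((star a * a + t k • 1) * R' k)) := by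
          rw [hR'1 k, mul_one]
      _ = R' k * ((star a * c * a) * (star a * a + t k • 1)) * R' k := by
          simp only [mul_assoc]
      _ = R' k * ((star a * a + t k • 1) * (star a * c * a)) * R' k := by rw [h1]
      _ = (R' k * (star a * a + t k • 1)) * ((star a * c * a) * R' k) := by
          simp only [mul_assoc]
      _ = (star a * c * a) * R' k := by rw [hR'2 k, one_mul]
  -- per-k identity
  have hk : ∀ k, star a * m * (a * star a * R k) * n * a
      = star a * n * (a * star a * R k) * m * a := by
    intro k
    have e1 : ∀ c d : H →L[ℂ] H, star a * c * (a * star a * R k) * d * a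
        = (star a * c * a) * R' k * (star a * d * a) := by
      intro c d
      calc star a * c * (a * star a * R k) * d * a
          = (star a * c * a) * ((star a * R k) * (d * a)) := by simp only [mul_assoc]
        _ = (star a * c * a) * ((R' k * star a) * (d * a)) := by rw [hf2 k]
        _ = (star a * c * a) * R' k * (star a * d * a) := by simp only [mul_assoc]
    rw [e1 m n, e1 n m]
    calc (star a * m * a) * R' k * (star a * n * a)
        = (star a * m * a) * (R' k * (star a * n * a)) := mul_assoc _ _ _
      _ = (star a * m * a) * ((star a * n * a) * R' k) := by rw [hcomm k n hnn]
      _ = ((star a * m * a) * (star a * n * a)) * R' k := (mul_assoc _ _ _).symm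
      _ = ((star a * n * a) * (star a * m * a)) * R' k := by rw [hmn]
      _ = (star a * n * a) * ((star a * m * a) * R' k) := mul_assoc _ _ _
      _ = (star a * n * a) * (R' k * (star a * m * a)) := by rw [hcomm k m hmm]
      _ = (star a * n * a) * R' k * (star a * m * a) := (mul_assoc _ _ _).symm
  -- pass to the limit
  ext ξ
  have l1 : Tendsto (fun k => (star a * m * (a * star a * R k) * n * a) ξ) atTop
      (𝓝 ((star a * m * z * n * a) ξ)) := by
    have h0 := Dk_tendsto a R hR1 hR2 hR3 ((n * a) ξ)
    have h1 := ((star a * m).continuous.tendsto _).comp h0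
    convert h1 using 2 <;> rfl
  have l2 : Tendsto (fun k => (star a * n * (a * star a * R k) * m * a) ξ) atTop
      (𝓝 ((star a * n * z * m * a) ξ)) := by
    have h0 := Dk_tendsto a R hR1 hR2 hR3 ((m * a) ξ)
    have h1 := ((star a * n).continuous.tendsto _).comp h0
    convert h1 using 2 <;> rfl
  have : (fun k => (star a * m * (a * star a * R k) * n * a) ξ)
      = fun k => (star a * n * (a * star a * R k) * m * a) ξ := by
    funext k
    rw [hk k]
  rw [this] at l1
  exact tendsto_nhds_unique l1 l2

lemma star_mem_centralizer' {M : VonNeumannAlgebra H} {b : H →L[ℂ] H}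
    (hb : b ∈ Set.centralizer (M : Set (H →L[ℂ] H))) :
    star b ∈ Set.centralizer (M : Set (H →L[ℂ] H)) := by
  rw [Set.mem_centralizer_iff] at hb ⊢
  intro m hm
  have h1 := hb (star m) (star_mem hm)
  calc m * star b = star (b * star m) := by rw [star_mul, star_star]
    _ = star (star m * b) := by rw [h1]
    _ = star b * m := by rw [star_mul, star_star]

lemma core_abelian (M : VonNeumannAlgebra H) (hM : TypeISet (M : Set (H →L[ℂ] H)))
    (w : H →L[ℂ] H) (hwM : w ∈ M) (hws : w = star w) (hwp : w * w = w) (hw0 : w ≠ 0) :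
    ∃ z : H →L[ℂ] H, z ∈ M ∧ z = star z ∧ z * z = z ∧ z ≠ 0 ∧ w * z = z ∧ z * w = z ∧
      ∀ m ∈ M, ∀ n ∈ M, (z * m * z) * (z * n * z) = (z * n * z) * (z * m * z) := by
  classical
  -- Step A : central support of w
  set G : Set H := {u : H | ∃ m ∈ (M : Set (H →L[ℂ] H)), ∃ ξ : H, (m * w) ξ = u} with hG
  set K0 : Submodule ℂ H := Submodule.span ℂ G with hK0
  set K : Submodule ℂ H := K0.topologicalClosure with hK
  haveI : CompleteSpace K := K0.isClosed_topologicalClosure.completeSpace_coe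
  set c : H →L[ℂ] H := projCLM K with hc
  have hKinv : ∀ b : H →L[ℂ] H,
      (∀ m : H →L[ℂ] H, m ∈ M → ∀ ξ : H, ∃ m' : H →L[ℂ] H, ∃ ξ' : H,
        m' ∈ M ∧ b ((m * w) ξ) = (m' * w) ξ') →
      ∀ u ∈ K, b u ∈ K := by
    intro b hb
    apply invar_closure
    intro u hu
    induction hu using Submodule.span_induction with
    | mem u hmem =>
        obtain ⟨m, hm, ξ, rfl⟩ := hmem
        obtain ⟨m', ξ', hm', hbm⟩ := hb m hm ξ
        rw [hbm]
        exact Submodule.le_topologicalClosure K0 (Submodule.subset_span ⟨m', hm', ξ', rfl⟩)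
    | zero => simpa using (zero_mem K)
    | add x y _ _ hx hy => simpa using add_mem hx hy
    | smul r x _ hx => simpa using Submodule.smul_mem _ r hx
  have hbcent : ∀ b : H →L[ℂ] H, b ∈ Set.centralizer (M : Set (H →L[ℂ] H)) →
      ∀ u ∈ K, b u ∈ K := by
    intro b hb
    apply hKinv
    intro m hm ξ
    refine ⟨m, b ξ, hm, ?_⟩
    have h1 : (m * w) * b = b * (m * w) :=
      (Set.mem_centralizer_iff.mp hb) (m * w) (show m * w ∈ (M : Set (H →L[ℂ] H)) from mul_mem hm hwM)
    calc b ((m * w) ξ) = ((b * (m * w)) ξ) := (ContinuousLinearMap.mul_apply _ _ _).symm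
      _ = (((m * w) * b) ξ) := by rw [h1]
      _ = (m * w) (b ξ) := ContinuousLinearMap.mul_apply _ _ _
  have hbmem : ∀ b : H →L[ℂ] H, b ∈ M → ∀ u ∈ K, b u ∈ K := by
    intro b hb
    apply hKinv
    intro m hm ξ
    refine ⟨b * m, ξ, mul_mem hb hm, ?_⟩
    simp only [ContinuousLinearMap.mul_apply]
  have hccentcomm : ∀ b ∈ Set.centralizer (M : Set (H →L[ℂ] H)), b * c = c * b := by
    intro b hb
    exact projCLM_commute K b (hbcent b hb) (hbcent (star b) (star_mem_centralizer' hb))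
  have hcM : c ∈ M := by
    have : c ∈ Set.centralizer (Set.centralizer (M : Set (H →L[ℂ] H))) := by
      rw [Set.mem_centralizer_iff]
      intro b hb
      exact hccentcomm b hb
    rwa [M.centralizer_centralizer] at this
  have hccomm : ∀ x ∈ (M : Set (H →L[ℂ] H)), c * x = x * c := by
    intro x hx
    exact (projCLM_commute K x (hbmem x hx) (hbmem (star x) (star_mem hx))).symm
  have hcw : c * w = w := by
    ext ξ
    show c (w ξ) = w ξ
    apply projCLM_eq_self
    apply Submodule.le_topologicalClosure K0
    apply Submodule.subset_span
    exact ⟨1, one_mem M, ξ, by simp⟩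
  have hc0 : c ≠ 0 := by
    intro h0
    apply hw0
    rw [← hcw, h0, zero_mul]
  have hcs : c = star c := (projCLM_star K).symm
  have hcp : c * c = c := projCLM_idem K
  -- Step B : get abelian projection h under c
  obtain ⟨h, hhM, hhs, hhp, hh0, hch, habel⟩ := hM c hcM hcs hcp hccomm hc0
  -- Step C : find x with w * x * h ≠ 0
  have hex : ∃ x : H →L[ℂ] H, x ∈ M ∧ w * x * h ≠ 0 := by
    by_contra hno
    push_neg at hno
    have hxw : ∀ x : H →L[ℂ] H, x ∈ M → h * x * w = 0 := by
      intro x hx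
      have h1 : w * star x * h = 0 := hno (star x) (star_mem hx)
      have h2 := congrArg star h1
      rw [star_zero] at h2
      calc h * x * w = star (w * star x * h) := by
            rw [star_mul, star_mul, star_star, ← hhs, ← hws, mul_assoc]
        _ = 0 := h2
    have hhc : h * c = 0 := by
      ext ξ
      show h (c ξ) = (0 : H →L[ℂ] H) ξ
      have hKker : ∀ u ∈ K, h u = 0 := by
        intro u hu
        have hle : K ≤ h.ker := by
          apply Submodule.topologicalClosure_minimal
          · rw [Submodule.span_le]
            rintro u ⟨m, hm, ξ', rfl⟩
            have : h ((m * w) ξ') = ((h * (m * w)) ξ') := (ContinuousLinearMap.mul_apply _ _ _).symm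
            simp only [SetLike.mem_coe, LinearMap.mem_ker, ContinuousLinearMap.coe_coe]
            rw [this, ← mul_assoc, hxw m hm, ContinuousLinearMap.zero_apply]
          · exact ContinuousLinearMap.isClosed_ker h
        exact hle hu
      rw [hKker (c ξ) (projCLM_mem K ξ)]
      simp
    have : h = 0 := by
      have h2 := congrArg star hhc
      rw [star_zero, star_mul, ← hhs, ← hcs] at h2
      rw [← hch, h2]
    exact hh0 this
  obtain ⟨x, hxM, ha0⟩ := hex
  set a : H →L[ℂ] H := w * x * h with ha
  have haM : a ∈ M := mul_mem (mul_mem hwM hxM) hhM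
  have hwa : w * a = a := by rw [ha, ← mul_assoc, ← mul_assoc, hwp]
  have hstar_a : star a = h * star x * w := by
    rw [ha, star_mul, star_mul, ← hws, ← hhs, mul_assoc]
  -- commutativity of star a * m * a family
  have hCommKey : ∀ m ∈ (M : Set (H →L[ℂ] H)), ∀ n ∈ (M : Set (H →L[ℂ] H)),
      (star a * m * a) * (star a * n * a) = (star a * n * a) * (star a * m * a) := by
    have hform : ∀ m : H →L[ℂ] H, star a * m * a = h * (star x * w * m * w * x) * h := by
      intro m
      rw [hstar_a, ha]
      simp only [mul_assoc]
    intro m hm n hn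
    rw [hform m, hform n]
    exact habel _ (mul_mem (mul_mem (mul_mem (mul_mem (star_mem hxM) hwM) hm) hwM) hxM)
      _ (mul_mem (mul_mem (mul_mem (mul_mem (star_mem hxM) hwM) hn) hwM) hxM)
  have hCommKey1 : ∀ n ∈ (M : Set (H →L[ℂ] H)),
      (star a * a) * (star a * n * a) = (star a * n * a) * (star a * a) := by
    intro n hn
    have h1 : star a * a = star a * 1 * a := by rw [mul_one]
    rw [h1]
    exact hCommKey 1 (one_mem M) n hn
  -- Step D : range projection of a
  set L : Submodule ℂ H := (a.range : Submodule ℂ H).topologicalClosure with hL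
  haveI : CompleteSpace L :=
    (a.range : Submodule ℂ H).isClosed_topologicalClosure.completeSpace_coe
  set z : H →L[ℂ] H := projCLM L with hz
  have hrange_le : ∀ ξ : H, a ξ ∈ L :=
    fun ξ => Submodule.le_topologicalClosure _ (LinearMap.mem_range_self (a : H →ₗ[ℂ] H) ξ)
  have hza : z * a = a := by
    ext ξ
    exact projCLM_eq_self L (hrange_le ξ)
  have hz0 : z ≠ 0 := by
    intro h0
    apply ha0
    show a = 0
    rw [← hza, h0, zero_mul]
  have hwz : w * z = z := by
    have hfix : ∀ u ∈ L, w u = u := by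
      intro u hu
      have hle : L ≤ (w - 1).ker := by
        apply Submodule.topologicalClosure_minimal
        · rintro u ⟨ξ, rfl⟩
          simp only [SetLike.mem_coe, LinearMap.mem_ker, ContinuousLinearMap.coe_coe]
          have : (w - 1) (a ξ) = ((w - 1) * a) ξ := (ContinuousLinearMap.mul_apply _ _ _).symm
          rw [this, sub_mul, hwa, one_mul, sub_self, ContinuousLinearMap.zero_apply]
        · exact ContinuousLinearMap.isClosed_ker (w - 1)
      have := hle hu
      rw [LinearMap.mem_ker, ContinuousLinearMap.coe_coe] at this
      have h2 : (w - 1) u = w u - u := by simp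
      rw [h2] at this
      exact sub_eq_zero.mp this
    ext ξ
    exact hfix (z ξ) (projCLM_mem L ξ)
  have hzs : z = star z := (projCLM_star L).symm
  have hzp : z * z = z := projCLM_idem L
  have hzw : z * w = z := by
    have h1 := congrArg star hwz
    rwa [star_mul, ← hzs, ← hws] at h1
  have hzM : z ∈ M := by
    have hLinv : ∀ b : H →L[ℂ] H, b * a = a * b → ∀ u ∈ L, b u ∈ L := by
      intro b hb
      apply invar_closure
      rintro u ⟨ξ, rfl⟩
      have : b (a ξ) = a (b ξ) := by
        rw [← ContinuousLinearMap.mul_apply, hb, ContinuousLinearMap.mul_apply]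
      rw [ContinuousLinearMap.coe_coe, this]
      exact hrange_le (b ξ)
    have : z ∈ Set.centralizer (Set.centralizer (M : Set (H →L[ℂ] H))) := by
      rw [Set.mem_centralizer_iff]
      intro b hb
      have hba : b * a = a * b := (Set.mem_centralizer_iff.mp hb a
        (show a ∈ (M : Set (H →L[ℂ] H)) from haM)).symm
      have hba' : star b * a = a * star b := by
        have := Set.mem_centralizer_iff.mp (star_mem_centralizer' hb) a
          (show a ∈ (M : Set (H →L[ℂ] H)) from haM)
        exact this.symm
      exact projCLM_commute L b (hLinv b hba) (hLinv (star b) hba')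
    rwa [M.centralizer_centralizer] at this
  -- Step E : z is abelian
  refine ⟨z, hzM, hzs, hzp, hz0, hwz, hzw, ?_⟩
  intro m hm n hn
  have E1 : star a * m * z * n * a = star a * n * z * m * a :=
    key_identity a m n (hCommKey1 m hm) (hCommKey1 n hn) (hCommKey m hm n hn)
  -- density argument
  have hLset : (L : Set H) = closure (a.range : Set H) := by
    rw [hL, Submodule.topologicalClosure_coe]
  have hsym : ∀ u v : H, ⟪z u, v⟫ = ⟪u, z v⟫ := by
    intro u v
    have h1 : ContinuousLinearMap.adjoint z = z := by
      rw [← ContinuousLinearMap.star_eq_adjoint, ← hzs]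
    calc ⟪z u, v⟫ = ⟪(ContinuousLinearMap.adjoint z) u, v⟫ := by rw [h1]
      _ = ⟪u, z v⟫ := ContinuousLinearMap.adjoint_inner_left z v u
  have hclaim : ∀ u ∈ L, ∀ v ∈ L, ⟪(m * z * n) u, v⟫ = ⟪(n * z * m) u, v⟫ := by
    have hgen : ∀ ξ η : H, ⟪(m * z * n) (a ξ), a η⟫ = ⟪(n * z * m) (a ξ), a η⟫ := by
      intro ξ η
      have hAA : ∀ p : H →L[ℂ] H, ⟪p (a ξ), a η⟫ = ⟪(star a * (p * a)) ξ, η⟫ := by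
        intro p
        calc ⟪p (a ξ), a η⟫ = ⟪((p * a) ξ), a η⟫ := rfl
          _ = ⟪(ContinuousLinearMap.adjoint a) ((p * a) ξ), η⟫ :=
              (ContinuousLinearMap.adjoint_inner_left a η ((p * a) ξ)).symm
          _ = ⟪(star a * (p * a)) ξ, η⟫ := by
              rw [ContinuousLinearMap.star_eq_adjoint]; rfl
      have e1 := hAA (m * z * n)
      have e2 := hAA (n * z * m)
      rw [e1, e2]
      rw [show star a * ((m * z * n) * a) = star a * m * z * n * a by simp only [mul_assoc],
        show star a * ((n * z * m) * a) = star a * n * z * m * a by simp only [mul_assoc], E1]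
    -- extend by continuity
    set g : H × H → ℂ := fun p => ⟪(m * z * n) p.1, p.2⟫ - ⟪(n * z * m) p.1, p.2⟫ with hg
    have hgcont : Continuous g := by
      apply Continuous.sub
      · exact Continuous.inner ((m * z * n).continuous.comp continuous_fst) continuous_snd
      · exact Continuous.inner ((n * z * m).continuous.comp continuous_fst) continuous_snd
    have hgzero : ∀ p ∈ (a.range : Set H) ×ˢ (a.range : Set H), g p = 0 := by
      rintro ⟨u, v⟩ ⟨⟨ξ, rfl⟩, ⟨η, rfl⟩⟩
      simp only [hg, sub_eq_zero]
      exact hgen ξ η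
    have hclosed : IsClosed {p : H × H | g p = 0} :=
      isClosed_eq hgcont continuous_const
    have hsubset : (L : Set H) ×ˢ (L : Set H) ⊆ {p : H × H | g p = 0} := by
      rw [hLset, ← closure_prod_eq]
      apply closure_minimal _ hclosed
      exact hgzero
    intro u hu v hv
    have := hsubset (Set.mk_mem_prod hu hv)
    simpa [hg, sub_eq_zero] using this
  have hmid : z * (m * z * n) * z = z * (n * z * m) * z := by
    ext ξ
    apply ext_inner_right ℂ
    intro η
    show ⟪(z * (m * z * n) * z) ξ, η⟫ = ⟪(z * (n * z * m) * z) ξ, η⟫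
    have hu : z ξ ∈ L := projCLM_mem L ξ
    have hv : z η ∈ L := projCLM_mem L η
    calc ⟪(z * (m * z * n) * z) ξ, η⟫ = ⟪z ((m * z * n) (z ξ)), η⟫ := by
          simp only [ContinuousLinearMap.mul_apply]
      _ = ⟪(m * z * n) (z ξ), z η⟫ := hsym _ _
      _ = ⟪(n * z * m) (z ξ), z η⟫ := hclaim _ hu _ hv
      _ = ⟪z ((n * z * m) (z ξ)), η⟫ := (hsym _ _).symm
      _ = ⟪(z * (n * z * m) * z) ξ, η⟫ := by
          simp only [ContinuousLinearMap.mul_apply]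
  calc (z * m * z) * (z * n * z) = z * (m * (z * z) * n) * z := by simp only [mul_assoc]
    _ = z * (m * z * n) * z := by rw [hzp]
    _ = z * (n * z * m) * z := hmid
    _ = z * (n * (z * z) * m) * z := by rw [hzp]
    _ = (z * n * z) * (z * m * z) := by simp only [mul_assoc]

/-- Let `M` be a type I von Neumann algebra and `e ∈ M` a partial
isometry.  Then the Peirce 2-space `M₂(e)`, a von Neumann algebra under
`x·y = xe*y` and `x♯ = ex*e` with unit `e`, is again of type I: every nonzero
central projection `v` of `(M₂(e),·,♯)` dominates a nonzero abelian projection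
`z` of `(M₂(e),·,♯)`. -/
theorem stmt_0 (M : VonNeumannAlgebra H)
    (hMtypeI : TypeISet (M : Set (H →L[ℂ] H)))
    (e : H →L[ℂ] H) (heM : e ∈ M) (hpi : e * star e * e = e) :
    ∀ v ∈ PeirceTwo M e, v * star e * v = v → e * star v * e = v →
      (∀ x ∈ PeirceTwo M e, v * star e * x = x * star e * v) → v ≠ 0 →
      ∃ z ∈ PeirceTwo M e, z * star e * z = z ∧ e * star z * e = z ∧ z ≠ 0 ∧
        z * star e * v = z ∧
        ∀ x ∈ PeirceTwo M e, ∀ y ∈ PeirceTwo M e,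
          (z * star e * x * star e * z) * star e * (z * star e * y * star e * z)
            = (z * star e * y * star e * z) * star e * (z * star e * x * star e * z) := by
  intro v hvP hvv hvstar _hcent hv0
  obtain ⟨hvM, hv2⟩ := hvP
  have hpis : star e * e * star e = star e := by
    have h := congrArg star hpi
    simp only [star_mul, star_star] at h
    simp only [← mul_assoc] at h
    exact h
  have pe : ∀ b : H →L[ℂ] H, b * e * star e * e = b * e := by
    intro b
    calc b * e * star e * e = b * (e * star e * e) := by simp only [mul_assoc]
      _ = b * e := by rw [hpi]
  have ps : ∀ b : H →L[ℂ] H, b * star e * e * star e = b * star e := by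
    intro b
    calc b * star e * e * star e = b * (star e * e * star e) := by simp only [mul_assoc]
      _ = b * star e := by rw [hpis]
  have pl : ∀ x : H →L[ℂ] H, e * star e * x * star e * e = x → e * star e * x = x := by
    intro x hx2
    conv_lhs => rw [← hx2]
    calc e * star e * (e * star e * x * star e * e)
        = e * star e * e * star e * x * star e * e := by simp only [mul_assoc]
      _ = e * star e * x * star e * e := by rw [hpi]
      _ = x := hx2
  have pr : ∀ x : H →L[ℂ] H, e * star e * x * star e * e = x → x * star e * e = x := by
    intro x hx2
    conv_lhs => rw [← hx2]
    calc e * star e * x * star e * e * star e * e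
        = e * star e * x * star e * (e * star e * e) := by simp only [mul_assoc]
      _ = e * star e * x * star e * e := by rw [hpi]
      _ = x := hx2
  have dv1 : e * star e * v = v := pl v hv2
  have dv2 : v * star e * e = v := pr v hv2
  -- padded versions
  have pad_dv1 : ∀ b : H →L[ℂ] H, b * e * star e * v = b * v := by
    intro b
    calc b * e * star e * v = b * (e * star e * v) := by simp only [mul_assoc]
      _ = b * v := by rw [dv1]
  -- star of Peirce relation for v
  have hv2star : star e * e * star v * e * star e = star v := by
    have h := congrArg star hv2
    simp only [star_mul, star_star] at h
    simp only [← mul_assoc] at h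
    exact h
  -- the projection w = v e*
  have hestar : e * star v = v * star e := by
    calc e * star v = e * (star e * e * star v * e * star e) := by rw [hv2star]
      _ = (e * star e * e) * star v * e * star e := by simp only [mul_assoc]
      _ = e * star v * e * star e := by rw [hpi]
      _ = (e * star v * e) * star e := by simp only [mul_assoc]
      _ = v * star e := by rw [hvstar]
  have hwstar : v * star e = star (v * star e) := by
    rw [star_mul, star_star, hestar]
  have hwp : (v * star e) * (v * star e) = v * star e := by
    calc (v * star e) * (v * star e) = (v * star e * v) * star e := by simp only [mul_assoc]
      _ = v * star e := by rw [hvv]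
  have hwM : v * star e ∈ M := mul_mem hvM (star_mem heM)
  have hw0 : v * star e ≠ 0 := by
    intro h0
    apply hv0
    calc v = v * star e * e := dv2.symm
      _ = 0 * e := by rw [h0]
      _ = 0 := zero_mul e
  obtain ⟨y, hyM, hys, hyp, hy0, hwy, hyw, hycomm⟩ :=
    core_abelian M hMtypeI (v * star e) hwM hwstar hwp hw0
  -- absorption of p = e e* by y
  have f_py : e * star e * y = y := by
    conv_lhs => rw [← hwy]
    calc e * star e * (v * star e * y)
        = (e * star e * v) * star e * y := by simp only [mul_assoc]
      _ = v * star e * y := by rw [dv1]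
      _ = y := hwy
  have f_yp : y * e * star e = y := by
    conv_lhs => rw [← hyw]
    calc y * (v * star e) * e * star e
        = y * (v * star e * e) * star e := by simp only [mul_assoc]
      _ = y * (v * star e) := by rw [dv2]; simp only [mul_assoc]
      _ = y := hyw
  have pad_py : ∀ b : H →L[ℂ] H, b * e * star e * y = b * y := by
    intro b
    calc b * e * star e * y = b * (e * star e * y) := by simp only [mul_assoc]
      _ = b * y := by rw [f_py]
  -- the abelian projection z = y e in Peirce form
  refine ⟨y * e, ⟨mul_mem hyM heM, ?_⟩, ?_, ?_, ?_, ?_, ?_⟩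
  · -- Peirce membership
    calc e * star e * (y * e) * star e * e
        = (e * star e * y) * (e * star e * e) := by simp only [mul_assoc]
      _ = y * e := by rw [hpi, f_py]
  · -- idempotent
    calc y * e * star e * (y * e) = (y * e * star e * y) * e := by simp only [mul_assoc]
      _ = (y * y) * e := by rw [pad_py y]
      _ = y * e := by rw [hyp]
  · -- self-adjoint in Peirce sense
    calc e * star (y * e) * e = e * (star e * star y) * e := by rw [star_mul]
      _ = e * (star e * y) * e := by rw [← hys]
      _ = (e * star e * y) * e := by simp only [mul_assoc]
      _ = y * e := by rw [f_py]
  · -- nonzero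
    intro h0
    apply hy0
    calc y = y * e * star e := f_yp.symm
      _ = 0 * star e := by rw [h0]
      _ = 0 := zero_mul _
  · -- dominated by v
    calc y * e * star e * v = y * v := pad_dv1 y
      _ = y * (v * star e * e) := by rw [dv2]
      _ = (y * (v * star e)) * e := by simp only [mul_assoc]
      _ = y * e := by rw [hyw]
  · -- abelian
    intro x hxP x' hx'P
    obtain ⟨hxM, hx2⟩ := hxP
    obtain ⟨hx'M, hx'2⟩ := hx'P
    have form : ∀ u : H →L[ℂ] H, e * star e * u * star e * e = u →
        y * e * star e * u * star e * (y * e) = (y * (u * star e) * y) * e := by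
      intro u hu2
      have plu : e * star e * u = u := pl u hu2
      calc y * e * star e * u * star e * (y * e)
          = y * (e * star e * u) * star e * y * e := by simp only [mul_assoc]
        _ = y * u * star e * y * e := by rw [plu]
        _ = (y * (u * star e) * y) * e := by simp only [mul_assoc]
    have eB : ∀ c : H →L[ℂ] H, e * star e * (y * c * y * e) = y * c * y * e := by
      intro c
      calc e * star e * (y * c * y * e) = (e * star e * y) * (c * (y * e)) := by
            simp only [mul_assoc]
        _ = y * (c * (y * e)) := by rw [f_py]
        _ = y * c * y * e := by simp only [mul_assoc]
    set A : H →L[ℂ] H := y * (x * star e) * y with hA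
    set B : H →L[ℂ] H := y * (x' * star e) * y with hB
    have hAB : A * B = B * A :=
      hycomm (x * star e) (mul_mem hxM (star_mem heM))
        (x' * star e) (mul_mem hx'M (star_mem heM))
    have key : ∀ C D : H →L[ℂ] H, (C * e) * star e * (D * e) = C * D * e → True := fun _ _ _ => trivial
    have comb : ∀ c d : H →L[ℂ] H,
        ((y * c * y) * e) * star e * ((y * d * y) * e) = (y * c * y) * (y * d * y) * e := by
      intro c d
      calc ((y * c * y) * e) * star e * ((y * d * y) * e)
          = (y * c * y) * (e * star e * (y * d * y * e)) := by simp only [mul_assoc]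
        _ = (y * c * y) * (y * d * y * e) := by rw [eB d]
        _ = (y * c * y) * (y * d * y) * e := by simp only [mul_assoc]
    rw [form x hx2, form x' hx'2]
    rw [comb (x * star e) (x' * star e), comb (x' * star e) (x * star e)]
    rw [← hA, ← hB, hAB]
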